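/- Let F₂ be an (f,ν)-robust aggregation rule and let the mixed points y_i be produced by one step of F-robust gossip satisfying the contraction (1/|H|) Σ_{i∈H} ‖y_i − x̄_H‖² ≤ (1 − γ(1−δ)) (1/|H|) Σ_{i∈H} ‖x_i − x̄_H‖² and ‖ȳ_H − x̄_H‖² bounded so that the bias–variance decomposition applies. Then ‖F₂(y_1,…,y_n) − x̄_H‖² ≤ (1+ν)(1 − γ(1−δ)) (1/|H|) Σ_{i∈H} ‖x_i − x̄_H‖². In particular, on the fully connected graph with γ = 1, the composed rule is (f, δ(1+ν))-robust where δ = 2ρf/(n−f). -/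

import Mathlib

open RealInnerProductSpace Finset

lemma aux_young (u v t ν : ℝ) (hu : 0 ≤ u) (ht : 0 ≤ t) (hν : 0 ≤ ν)
    (h : u^2 ≤ ν*t) : (u+v)^2 ≤ (1+ν)*(t+v^2) := by
  rcases eq_or_lt_of_le hν with hν0 | hν0
  · have hu0 : u = 0 := by nlinarith [sq_nonneg u]
    subst hu0; rw [← hν0]; nlinarith
  · nlinarith [sq_nonneg (u - ν*v), mul_pos hν0 hν0]

lemma sum_sq_decomp {E : Type*} [NormedAddCommGroup E] [InnerProductSpace ℝ E]
    {ι : Type*} (H : Finset ι) (y : ι → E) (xb : E) :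
    ∑ i ∈ H, ‖y i - xb‖^2 =
      ∑ i ∈ H, ‖y i - (H.card : ℝ)⁻¹ • ∑ j ∈ H, y j‖^2
        + (H.card : ℝ) * ‖(H.card : ℝ)⁻¹ • ∑ j ∈ H, y j - xb‖^2 := by
  rcases H.eq_empty_or_nonempty with rfl | hne
  · simp
  set yb := (H.card : ℝ)⁻¹ • ∑ j ∈ H, y j with hyb
  have hm : (H.card : ℝ) ≠ 0 := by
    exact_mod_cast (Finset.card_pos.mpr hne).ne'
  have hz : ∑ i ∈ H, (y i - yb) = 0 := by
    rw [Finset.sum_sub_distrib, Finset.sum_const, hyb, ← Nat.cast_smul_eq_nsmul ℝ,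
      smul_smul, mul_inv_cancel₀ hm, one_smul, sub_self]
  calc ∑ i ∈ H, ‖y i - xb‖^2
      = ∑ i ∈ H, (‖y i - yb‖^2 + 2*⟪y i - yb, yb - xb⟫ + ‖yb - xb‖^2) := by
        refine Finset.sum_congr rfl fun i _ => ?_
        rw [show y i - xb = (y i - yb) + (yb - xb) by abel, norm_add_sq_real]
    _ = ∑ i ∈ H, ‖y i - yb‖^2 + 2*⟪∑ i ∈ H, (y i - yb), yb - xb⟫
          + (H.card : ℝ) * ‖yb - xb‖^2 := by
        rw [Finset.sum_add_distrib, Finset.sum_add_distrib, sum_inner,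
          ← Finset.mul_sum, Finset.sum_const, nsmul_eq_mul]
    _ = _ := by rw [hz, inner_zero_left]; ring

/-- Composing an (f,ν)-robust aggregation with a contracting robust-gossip mixing
step yields a (1+ν)(1 − γ(1−δ)) contraction; in particular with γ = 1 the composed
rule is (f, δ(1+ν))-robust. -/
theorem robust_gossip_mixing_composition {d n f : ℕ}
    (H : Finset (Fin n)) (hHcard : H.card = n - f) (hHne : H.Nonempty)
    (F₂ : (Fin n → EuclideanSpace ℝ (Fin d)) → EuclideanSpace ℝ (Fin d))
    (ν γ δ : ℝ) (hν : 0 ≤ ν)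
    -- F₂ is (f, ν)-robust
    (hF₂ : ∀ (z : Fin n → EuclideanSpace ℝ (Fin d)) (S : Finset (Fin n)), S.card = n - f →
      ‖F₂ z - (S.card : ℝ)⁻¹ • ∑ i ∈ S, z i‖ ^ 2 ≤
        ν * ((S.card : ℝ)⁻¹ * ∑ i ∈ S, ‖z i - (S.card : ℝ)⁻¹ • ∑ j ∈ S, z j‖ ^ 2))
    (x y : Fin n → EuclideanSpace ℝ (Fin d))
    -- contraction of the robust-gossip mixing step around the honest average of x
    (hcontr : (H.card : ℝ)⁻¹ * ∑ i ∈ H, ‖y i - (H.card : ℝ)⁻¹ • ∑ j ∈ H, x j‖ ^ 2 ≤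
      (1 - γ * (1 - δ)) *
        ((H.card : ℝ)⁻¹ * ∑ i ∈ H, ‖x i - (H.card : ℝ)⁻¹ • ∑ j ∈ H, x j‖ ^ 2)) :
    ‖F₂ y - (H.card : ℝ)⁻¹ • ∑ j ∈ H, x j‖ ^ 2 ≤
      (1 + ν) * (1 - γ * (1 - δ)) *
        ((H.card : ℝ)⁻¹ * ∑ i ∈ H, ‖x i - (H.card : ℝ)⁻¹ • ∑ j ∈ H, x j‖ ^ 2) ∧
    (γ = 1 → ‖F₂ y - (H.card : ℝ)⁻¹ • ∑ j ∈ H, x j‖ ^ 2 ≤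
      δ * (1 + ν) *
        ((H.card : ℝ)⁻¹ * ∑ i ∈ H, ‖x i - (H.card : ℝ)⁻¹ • ∑ j ∈ H, x j‖ ^ 2)) := by
  set xb := (H.card : ℝ)⁻¹ • ∑ j ∈ H, x j with hxb
  set yb := (H.card : ℝ)⁻¹ • ∑ j ∈ H, y j with hyb
  have hcardpos : (0:ℝ) < (H.card : ℝ) := by
    exact_mod_cast Finset.card_pos.mpr hHne
  have hcinv : (0:ℝ) ≤ (H.card : ℝ)⁻¹ := by positivity
  -- abbreviations
  set S := (H.card : ℝ)⁻¹ * ∑ i ∈ H, ‖x i - xb‖ ^ 2 with hS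
  set t := (H.card : ℝ)⁻¹ * ∑ i ∈ H, ‖y i - yb‖ ^ 2 with ht
  set u := ‖F₂ y - yb‖ with hu
  set v := ‖yb - xb‖ with hv
  have ht0 : 0 ≤ t := by
    apply mul_nonneg hcinv
    exact Finset.sum_nonneg fun i _ => by positivity
  have hrob : u ^ 2 ≤ ν * t := hF₂ y H hHcard
  -- bias-variance decomposition
  have hdecomp : (H.card : ℝ)⁻¹ * ∑ i ∈ H, ‖y i - xb‖ ^ 2 = t + v ^ 2 := by
    rw [sum_sq_decomp H y xb, mul_add, ← hyb, ht, hv, ← mul_assoc,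
      inv_mul_cancel₀ hcardpos.ne', one_mul, sq]
  have hAB : t + v ^ 2 ≤ (1 - γ * (1 - δ)) * S := by
    rw [← hdecomp]; exact hcontr
  -- triangle inequality
  have htri : ‖F₂ y - xb‖ ≤ u + v := by
    calc ‖F₂ y - xb‖ = ‖(F₂ y - yb) + (yb - xb)‖ := by rw [sub_add_sub_cancel]
      _ ≤ u + v := norm_add_le _ _
  have hmain : ‖F₂ y - xb‖ ^ 2 ≤ (1 + ν) * (1 - γ * (1 - δ)) * S := by
    calc ‖F₂ y - xb‖ ^ 2 ≤ (u + v) ^ 2 := by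
          apply pow_le_pow_left₀ (norm_nonneg _) htri
      _ ≤ (1 + ν) * (t + v ^ 2) :=
          aux_young u v t ν (norm_nonneg _) ht0 hν hrob
      _ ≤ (1 + ν) * ((1 - γ * (1 - δ)) * S) := by
          apply mul_le_mul_of_nonneg_left hAB (by linarith)
      _ = (1 + ν) * (1 - γ * (1 - δ)) * S := by ring
  refine ⟨hmain, fun hγ => ?_⟩
  subst hγ
  calc ‖F₂ y - xb‖ ^ 2 ≤ (1 + ν) * (1 - 1 * (1 - δ)) * S := hmain
    _ = δ * (1 + ν) * S := by ring
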